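/- Let P be a real polynomial of degree d all of whose roots t_1 > t_2 > ... > t_d are real, and let s > t_1. Then for every k ≥ 1, P^{(k+1)}(s)/P^{(k)}(s) ≤ P''(s)/P'(s), where P^{(k)} denotes the k-th derivative. Consequently, if P''(s)/P'(s) ≤ C for some C > 0, then for all k ≥ 1, P^{(k+1)}(s)/P^{(k)}(s) ≤ C, and hence for all t, |P(t) − P(s) − (t−s)P'(s)| ≤ |t−s| P'(s) · ((e^{C|t−s|} − 1)/(C|t−s|) − 1). -/

import Mathlib

open Polynomial

noncomputable def mprod (M : Multiset ℝ) : Polynomial ℝ := (M.map fun a => X - C a).prod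

lemma mprod_monic (M : Multiset ℝ) : (mprod M).Monic :=
  monic_multiset_prod_of_monic _ _ (fun a _ => monic_X_sub_C a)

lemma mprod_natDegree (M : Multiset ℝ) : (mprod M).natDegree = Multiset.card M :=
  natDegree_multiset_prod_X_sub_C_eq_card M

lemma mprod_roots (M : Multiset ℝ) : (mprod M).roots = M :=
  roots_multiset_prod_X_sub_C M

lemma eval_mprod_pos {s x : ℝ} (hx : s ≤ x) :
    ∀ (M : Multiset ℝ), (∀ r ∈ M, r < s) → 0 < (mprod M).eval x := by
  intro M
  induction M using Multiset.induction_on with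
  | empty => simp [mprod]
  | cons a M ih =>
    intro h
    rw [mprod, Multiset.map_cons, Multiset.prod_cons]
    simp only [eval_mul, eval_sub, eval_X, eval_C]
    have ha := h a (Multiset.mem_cons_self a M)
    exact mul_pos (by linarith) (ih fun r hr => h r (Multiset.mem_cons_of_mem hr))

lemma eval_derivative_mprod_nonneg {s x : ℝ} (hx : s ≤ x) :
    ∀ (M : Multiset ℝ), (∀ r ∈ M, r < s) → 0 ≤ (derivative (mprod M)).eval x := by
  intro M
  induction M using Multiset.induction_on with
  | empty => simp [mprod]
  | cons a M ih =>
    intro h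
    have ha := h a (Multiset.mem_cons_self a M)
    have h' : ∀ r ∈ M, r < s := fun r hr => h r (Multiset.mem_cons_of_mem hr)
    rw [mprod, Multiset.map_cons, Multiset.prod_cons, derivative_mul]
    simp only [derivative_sub, derivative_X, derivative_C, sub_zero, one_mul,
      eval_add, eval_mul, eval_sub, eval_X, eval_C]
    have h1 := eval_mprod_pos hx M h'
    have h2 := ih h'
    rw [mprod] at h1 h2
    nlinarith

lemma eval_derivative_mprod_pos {s x : ℝ} (hx : s ≤ x) (M : Multiset ℝ)
    (hM : M ≠ 0) (h : ∀ r ∈ M, r < s) : 0 < (derivative (mprod M)).eval x := by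
  obtain ⟨a, haM⟩ := Multiset.exists_mem_of_ne_zero hM
  obtain ⟨M', rfl⟩ := Multiset.exists_cons_of_mem haM
  have ha := h _ (Multiset.mem_cons_self _ M')
  have h' : ∀ r ∈ M', r < s := fun r hr => h r (Multiset.mem_cons_of_mem hr)
  rw [mprod, Multiset.map_cons, Multiset.prod_cons, derivative_mul]
  simp only [derivative_sub, derivative_X, derivative_C, sub_zero, one_mul,
    eval_add, eval_mul, eval_sub, eval_X, eval_C]
  have h1 := eval_mprod_pos hx M' h'
  have h2 := eval_derivative_mprod_nonneg hx M' h'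
  rw [mprod] at h1 h2
  nlinarith

lemma mprod_logconcave (x : ℝ) : ∀ (M : Multiset ℝ),
    (derivative (derivative (mprod M))).eval x * (mprod M).eval x ≤
      ((derivative (mprod M)).eval x) ^ 2 := by
  intro M
  induction M using Multiset.induction_on with
  | empty => simp [mprod]
  | cons a M ih =>
    rw [mprod, Multiset.map_cons, Multiset.prod_cons]
    simp only [derivative_mul, derivative_add, derivative_sub, derivative_X, derivative_C,
      derivative_one, sub_zero, one_mul, eval_add, eval_mul, eval_sub, eval_X, eval_C,
      derivative_zero, zero_mul, eval_zero, add_zero, zero_add]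
    rw [mprod] at ih
    set A := ((M.map fun a => X - C a)).prod.eval x
    set B := (derivative ((M.map fun a => X - C a)).prod).eval x
    set D := (derivative (derivative ((M.map fun a => X - C a)).prod)).eval x
    nlinarith [sq_nonneg A, sq_nonneg ((x - a) * B - A), sq_nonneg (x - a)]

def nice (s : ℝ) (Q : Polynomial ℝ) : Prop :=
  ∃ c : ℝ, ∃ M : Multiset ℝ, 0 < c ∧ (∀ r ∈ M, r < s) ∧ Q = C c * mprod M

lemma nice_pos {s x : ℝ} {Q : Polynomial ℝ} (h : nice s Q) (hx : s ≤ x) :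
    0 < Q.eval x := by
  obtain ⟨c, M, hc, hM, rfl⟩ := h
  rw [eval_mul, eval_C]
  exact mul_pos hc (eval_mprod_pos hx M hM)

lemma nice_deriv_pos {s x : ℝ} {Q : Polynomial ℝ} (h : nice s Q)
    (hdeg : 1 ≤ Q.natDegree) (hx : s ≤ x) : 0 < (derivative Q).eval x := by
  obtain ⟨c, M, hc, hM, rfl⟩ := h
  have hM0 : M ≠ 0 := by
    rintro rfl
    simp [mprod] at hdeg
  rw [derivative_C_mul, eval_mul, eval_C]
  exact mul_pos hc (eval_derivative_mprod_pos hx M hM0 hM)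

lemma nice_logconcave {s : ℝ} {Q : Polynomial ℝ} (h : nice s Q) (x : ℝ) :
    (derivative (derivative Q)).eval x * Q.eval x ≤ ((derivative Q).eval x) ^ 2 := by
  obtain ⟨c, M, hc, hM, rfl⟩ := h
  rw [derivative_C_mul, derivative_C_mul]
  simp only [eval_mul, eval_C]
  have := mprod_logconcave x M
  nlinarith [sq_nonneg c]

lemma nice_natDegree {s : ℝ} {Q : Polynomial ℝ} (h : nice s Q) :
    ∃ c : ℝ, ∃ M : Multiset ℝ, 0 < c ∧ (∀ r ∈ M, r < s) ∧ Q = C c * mprod M ∧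
      Q.natDegree = Multiset.card M := by
  obtain ⟨c, M, hc, hM, rfl⟩ := h
  refine ⟨c, M, hc, hM, rfl, ?_⟩
  rw [natDegree_C_mul (ne_of_gt hc), mprod_natDegree]

lemma nice_derivative {s : ℝ} {Q : Polynomial ℝ} (h : nice s Q)
    (hdeg : 1 ≤ Q.natDegree) :
    nice s (derivative Q) ∧ (derivative Q).natDegree = Q.natDegree - 1 := by
  obtain ⟨c, M, hc, hM, hQdef, hdeq⟩ := nice_natDegree h
  have hrootsQ : Q.roots = M := by
    rw [hQdef, roots_C_mul _ (ne_of_gt hc), mprod_roots]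
  have hd1 : (derivative Q).natDegree ≤ Q.natDegree - 1 := natDegree_derivative_le Q
  have hc1 : Multiset.card Q.roots ≤ Multiset.card (derivative Q).roots + 1 :=
    Polynomial.card_roots_le_derivative Q
  have hc2 : Multiset.card (derivative Q).roots ≤ (derivative Q).natDegree :=
    card_roots' _
  rw [hrootsQ, ← hdeq] at hc1
  have hdQ : (derivative Q).natDegree = Q.natDegree - 1 := by omega
  have hroots : Multiset.card (derivative Q).roots = (derivative Q).natDegree := by omega
  have hfac := C_leadingCoeff_mul_prod_multiset_X_sub_C hroots
  -- leading coefficient of Q is c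
  have hlcQ : Q.leadingCoeff = c := by
    rw [hQdef, leadingCoeff_mul, leadingCoeff_C, (mprod_monic M).leadingCoeff, mul_one]
  -- leading coefficient of derivative
  have hlc : (derivative Q).leadingCoeff = c * Q.natDegree := by
    rw [leadingCoeff, hdQ, coeff_derivative]
    have : Q.natDegree - 1 + 1 = Q.natDegree := by omega
    rw [this, ← leadingCoeff, hlcQ]
    have h2 : ((Q.natDegree - 1 : ℕ) : ℝ) + 1 = (Q.natDegree : ℝ) := by
      exact_mod_cast congrArg (fun k : ℕ => (k : ℝ)) this
    rw [h2]
  have hlcpos : 0 < (derivative Q).leadingCoeff := by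
    rw [hlc]
    have : (0 : ℝ) < Q.natDegree := by exact_mod_cast Nat.lt_of_lt_of_le Nat.zero_lt_one hdeg
    positivity
  have hloc : ∀ r ∈ (derivative Q).roots, r < s := by
    intro r hr
    by_contra hrs
    push_neg at hrs
    have h1 := nice_deriv_pos h hdeg hrs
    have h2 : (derivative Q).eval r = 0 := isRoot_of_mem_roots hr
    linarith
  exact ⟨⟨(derivative Q).leadingCoeff, (derivative Q).roots, hlcpos, hloc, hfac.symm⟩, hdQ⟩

theorem real_rooted_deriv_ratios (d : ℕ) (hd : 1 ≤ d) (t : Fin d → ℝ)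
    (ht : StrictAnti t) (c : ℝ) (hc : 0 < c) (P : Polynomial ℝ)
    (hP : P = C c * ∏ i, (X - C (t i))) (s : ℝ) (hs : t ⟨0, hd⟩ < s) :
    (∀ k : ℕ, 1 ≤ k →
      (derivative^[k + 1] P).eval s / (derivative^[k] P).eval s ≤
        (derivative^[2] P).eval s / (derivative^[1] P).eval s) ∧
    ∀ Cb : ℝ, 0 < Cb →
      (derivative^[2] P).eval s / (derivative^[1] P).eval s ≤ Cb →
      (∀ k : ℕ, 1 ≤ k →
        (derivative^[k + 1] P).eval s / (derivative^[k] P).eval s ≤ Cb) ∧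
      ∀ u : ℝ,
        |P.eval u - P.eval s - (u - s) * P.derivative.eval s| ≤
          |u - s| * P.derivative.eval s *
            ((Real.exp (Cb * |u - s|) - 1) / (Cb * |u - s|) - 1) := by
  -- `P` is nice
  have hMloc : ∀ r ∈ Multiset.map t Finset.univ.val, r < s := by
    intro r hr
    obtain ⟨i, _, rfl⟩ := Multiset.mem_map.mp hr
    have h0i : (⟨0, hd⟩ : Fin d) ≤ i := Fin.mk_le_of_le_val (Nat.zero_le _)
    exact lt_of_le_of_lt (ht.antitone h0i) hs
  have hPM : P = C c * mprod (Multiset.map t Finset.univ.val) := by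
    rw [hP, mprod, Multiset.map_map]
    rfl
  have niceP : nice s P := ⟨c, _, hc, hMloc, hPM⟩
  have hPdeg : P.natDegree = d := by
    rw [hPM, natDegree_C_mul (ne_of_gt hc), mprod_natDegree]
    simp
  -- iterated derivatives
  set D : ℕ → Polynomial ℝ := fun k => derivative^[k] P with hD
  have hDsucc : ∀ k, D (k + 1) = derivative (D k) := fun k =>
    Function.iterate_succ_apply' derivative k P
  have hDnice : ∀ k, k ≤ d → nice s (D k) ∧ (D k).natDegree = d - k := by
    intro k
    induction k with
    | zero => intro _; exact ⟨niceP, by simpa [hD] using hPdeg⟩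
    | succ k ih =>
      intro hk
      obtain ⟨h1, h2⟩ := ih (Nat.le_of_succ_le hk)
      have hdeg1 : 1 ≤ (D k).natDegree := by omega
      obtain ⟨h3, h4⟩ := nice_derivative h1 hdeg1
      rw [← hDsucc] at h3 h4
      exact ⟨h3, by omega⟩
  have hDzero : ∀ k, d < k → D k = 0 := by
    intro k
    induction k with
    | zero => omega
    | succ k ih =>
      intro hk
      rcases Nat.lt_or_ge d k with h | h
      · rw [hDsucc, ih h, derivative_zero]
      · have hkd : k = d := by omega
        subst hkd
        have h2 : (D k).natDegree = 0 := by simpa using (hDnice k le_rfl).2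
        rw [hDsucc, Polynomial.eq_C_of_natDegree_eq_zero h2, derivative_C]
  set a : ℕ → ℝ := fun k => (D k).eval s with ha
  have ha_pos : ∀ k, k ≤ d → 0 < a k := fun k hk =>
    nice_pos (hDnice k hk).1 le_rfl
  have ha_zero : ∀ k, d < k → a k = 0 := by
    intro k hk
    simp only [ha, hDzero k hk, eval_zero]
  have ha_nonneg : ∀ k, 0 ≤ a k := by
    intro k
    rcases le_or_gt k d with h | h
    · exact le_of_lt (ha_pos k h)
    · exact le_of_eq (ha_zero k h).symm
  have hlog : ∀ k, a (k + 2) * a k ≤ a (k + 1) ^ 2 := by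
    intro k
    rcases le_or_gt k d with h | h
    · have h2 : D (k + 2) = derivative (derivative (D k)) := by rw [hDsucc, hDsucc]
      show eval s (D (k + 2)) * eval s (D k) ≤ eval s (D (k + 1)) ^ 2
      rw [h2, hDsucc]
      exact nice_logconcave (hDnice k h).1 s
    · rw [ha_zero (k + 2) (by omega), zero_mul]
      positivity
  have hstep : ∀ k, a (k + 2) / a (k + 1) ≤ a (k + 1) / a k := by
    intro k
    rcases le_or_gt (k + 1) d with h | h
    · rw [div_le_div_iff₀ (ha_pos _ h) (ha_pos _ (by omega))]
      have := hlog k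
      nlinarith [ha_nonneg (k+2), ha_nonneg k]
    · rw [ha_zero (k+2) (by omega), zero_div]
      exact div_nonneg (ha_nonneg _) (ha_nonneg _)
  have hmono : ∀ k, 1 ≤ k → a (k + 1) / a k ≤ a 2 / a 1 := by
    intro k hk
    induction k, hk using Nat.le_induction with
    | base => norm_num
    | succ k hk ih => exact le_trans (hstep k) ih
  constructor
  · intro k hk
    exact hmono k hk
  intro Cb hCb hCb2
  have hratio : ∀ k, 1 ≤ k → a (k + 1) / a k ≤ Cb := fun k hk =>
    le_trans (hmono k hk) hCb2
  refine ⟨hratio, ?_⟩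
  have hgrow : ∀ k, 1 ≤ k → a (k + 1) ≤ Cb * a k := by
    intro k hk
    rcases le_or_gt k d with h | h
    · have h2 := hratio k hk
      rw [div_le_iff₀ (ha_pos k h)] at h2
      linarith
    · rw [ha_zero k h, ha_zero (k + 1) (by omega), mul_zero]
  have hpow : ∀ k, 1 ≤ k → a k ≤ Cb ^ (k - 1) * a 1 := by
    intro k hk
    induction k, hk using Nat.le_induction with
    | base => simp
    | succ k hk ih =>
      have h1 := hgrow k hk
      have h2 : Cb ^ (k + 1 - 1) = Cb * Cb ^ (k - 1) := by
        rw [show k + 1 - 1 = k - 1 + 1 by omega, pow_succ]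
        ring
      calc a (k + 1) ≤ Cb * a k := h1
        _ ≤ Cb * (Cb ^ (k - 1) * a 1) := by nlinarith
        _ = Cb ^ (k + 1 - 1) * a 1 := by rw [h2]; ring
  have hfact : ∀ i : ℕ, (0 : ℝ) < i.factorial := fun i => by
    exact_mod_cast i.factorial_pos
  have hai : ∀ i : ℕ, a i = i.factorial * (hasseDeriv i P).eval s := by
    intro i
    show eval s ((⇑derivative)^[i] P) = _
    rw [← Polynomial.factorial_smul_hasseDeriv (R := ℝ) (k := i), LinearMap.smul_apply,
      nsmul_eq_mul, eval_mul, eval_natCast]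
  have hcoeff : ∀ i : ℕ, (taylor s P).coeff i = a i / i.factorial := by
    intro i
    rw [taylor_coeff, hai i]
    field_simp
  have h2le : 2 ≤ d + 1 := by omega
  intro u
  rcases eq_or_ne u s with rfl | hus
  · simp
  have hTay : P.eval u = ∑ i ∈ Finset.range (d + 1), (a i / i.factorial) * (u - s) ^ i := by
    conv_lhs => rw [← taylor_eval_sub s P u]
    rw [eval_eq_sum_range' (n := d + 1) (by rw [natDegree_taylor, hPdeg]; omega)]
    exact Finset.sum_congr rfl fun i _ => by rw [hcoeff i]
  have h0eq : P.eval s = a 0 := by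
    show _ = eval s ((⇑derivative)^[0] P)
    simp
  have h1eq : P.derivative.eval s = a 1 := by
    show _ = eval s ((⇑derivative)^[1] P)
    rw [Function.iterate_one]
  have hsplit : P.eval u - P.eval s - (u - s) * P.derivative.eval s
      = ∑ i ∈ Finset.Ico 2 (d + 1), (a i / i.factorial) * (u - s) ^ i := by
    rw [hTay, h0eq, h1eq, Finset.range_eq_Ico,
      ← Finset.sum_Ico_consecutive _ (Nat.zero_le 2) h2le, ← Finset.range_eq_Ico,
      Finset.sum_range_succ, Finset.sum_range_one]
    simp [Nat.factorial]
    ring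
  set y := Cb * |u - s| with hy
  have hynn : 0 ≤ y := mul_nonneg hCb.le (abs_nonneg _)
  have hsum_exp : ∑ i ∈ Finset.Ico 2 (d + 1), y ^ i / i.factorial ≤ Real.exp y - 1 - y := by
    have h1 := Real.sum_le_exp_of_nonneg hynn (d + 1)
    rw [Finset.range_eq_Ico, ← Finset.sum_Ico_consecutive _ (Nat.zero_le 2) h2le,
      ← Finset.range_eq_Ico, Finset.sum_range_succ, Finset.sum_range_one] at h1
    simp [Nat.factorial] at h1
    linarith
  have habs : |P.eval u - P.eval s - (u - s) * P.derivative.eval s| ≤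
      (a 1 / Cb) * (Real.exp y - 1 - y) := by
    rw [hsplit]
    calc |∑ i ∈ Finset.Ico 2 (d + 1), (a i / i.factorial) * (u - s) ^ i|
        ≤ ∑ i ∈ Finset.Ico 2 (d + 1), |(a i / i.factorial) * (u - s) ^ i| :=
          Finset.abs_sum_le_sum_abs _ _
      _ ≤ ∑ i ∈ Finset.Ico 2 (d + 1), (a 1 / Cb) * (y ^ i / i.factorial) := by
          apply Finset.sum_le_sum
          intro i hi
          have hi2 : 2 ≤ i := (Finset.mem_Ico.mp hi).1
          obtain ⟨j, rfl⟩ : ∃ j, i = j + 1 := ⟨i - 1, by omega⟩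
          have h1 : |(a (j + 1) / (j + 1).factorial) * (u - s) ^ (j + 1)| =
              a (j + 1) * |u - s| ^ (j + 1) / (j + 1).factorial := by
            rw [abs_mul, abs_pow, abs_of_nonneg (div_nonneg (ha_nonneg _) (hfact _).le)]
            ring
          have key : a (j + 1) ≤ Cb ^ j * a 1 := by
            simpa using hpow (j + 1) (by omega)
          have hRHSeq : (a 1 / Cb) * (y ^ (j + 1) / (j + 1).factorial) =
              (Cb ^ j * a 1) * |u - s| ^ (j + 1) / (j + 1).factorial := by
            rw [hy]
            field_simp
            ring
          rw [h1, hRHSeq]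
          gcongr
      _ = (a 1 / Cb) * ∑ i ∈ Finset.Ico 2 (d + 1), y ^ i / i.factorial := by
          rw [Finset.mul_sum]
      _ ≤ (a 1 / Cb) * (Real.exp y - 1 - y) := by
          apply mul_le_mul_of_nonneg_left hsum_exp (div_nonneg (ha_nonneg 1) hCb.le)
  have hx : 0 < |u - s| := abs_pos.mpr (sub_ne_zero.mpr hus)
  have hy0 : 0 < y := mul_pos hCb hx
  have hfin : |u - s| * P.derivative.eval s * ((Real.exp y - 1) / y - 1) =
      (a 1 / Cb) * (Real.exp y - 1 - y) := by
    rw [h1eq, hy]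
    field_simp
  rw [hfin]
  exact habs
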